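/- For any nonempty subsets A and B of [0,1]^K, h(up(A), up(B)) ≤ h(A, B). -/

import Mathlib

/-- The upset of `A` within `[0,1]^K`: points of `[0,1]^K` dominating some point of `A`. -/
def upset (K : ℕ) (A : Set (Fin K → ℝ)) : Set (Fin K → ℝ) :=
  {x | x ∈ Set.Icc (0 : Fin K → ℝ) 1 ∧ ∃ y ∈ A, y ≤ x}

/-- Membership in the space `𝓕`: a nonempty Pareto frontier in `[0,1]^K`
(no element dominates a different element) whose upset is closed and convex. -/
def memF (K : ℕ) (V : Set (Fin K → ℝ)) : Prop :=
  V.Nonempty ∧ V ⊆ Set.Icc (0 : Fin K → ℝ) 1 ∧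
    (∀ u ∈ V, ∀ v ∈ V, u ≤ v → u = v) ∧
    IsClosed (upset K V) ∧ Convex ℝ (upset K V)

/-- The metric `d` on `𝓕`: Hausdorff distance (for the ℓ∞ norm) between upsets. -/
noncomputable def dF (K : ℕ) (U V : Set (Fin K → ℝ)) : ℝ :=
  Metric.hausdorffDist (upset K U) (upset K V)

lemma key {K : ℕ} (A B : Set (Fin K → ℝ)) (hBne : B.Nonempty)
    (hBsub : B ⊆ Set.Icc (0 : Fin K → ℝ) 1)
    (hne : EMetric.hausdorffEdist A B ≠ ⊤) :
    ∀ x ∈ upset K A, Metric.infDist x (upset K B) ≤ Metric.hausdorffDist A B := by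
  rintro x ⟨⟨hx0, hx1⟩, y, hyA, hyx⟩
  refine le_of_forall_pos_le_add fun ε hε => ?_
  have hinf : Metric.infDist y B ≤ Metric.hausdorffDist A B :=
    Metric.infDist_le_hausdorffDist_of_mem hyA hne
  obtain ⟨b, hbB, hb⟩ : ∃ b ∈ B, dist y b < Metric.hausdorffDist A B + ε := by
    rw [← Metric.infDist_lt_iff hBne]
    linarith
  set z : Fin K → ℝ := fun k => min 1 (max (x k) (b k)) with hz
  have hb0 := (hBsub hbB).1
  have hb1 := (hBsub hbB).2
  have hzB : z ∈ upset K B := by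
    refine ⟨⟨fun k => ?_, fun k => ?_⟩, b, hbB, fun k => ?_⟩
    · exact le_min zero_le_one (le_max_of_le_left (hx0 k))
    · exact min_le_left _ _
    · exact le_min (hb1 k) (le_max_of_le_right le_rfl)
  have hdist : dist x z ≤ dist y b := by
    rw [dist_pi_le_iff dist_nonneg]
    intro k
    have hk := dist_le_pi_dist y b k
    have hx1k : x k ≤ 1 := hx1 k
    have hb1k : b k ≤ 1 := hb1 k
    have hyk : y k ≤ x k := hyx k
    rcases le_or_gt (b k) (x k) with h | h
    · have : z k = x k := by
        simp only [hz]
        rw [max_eq_left h, min_eq_right hx1k]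
      rw [this]
      simpa using dist_nonneg (x := y) (y := b)
    · have : z k = b k := by
        simp only [hz]
        rw [max_eq_right h.le, min_eq_right hb1k]
      rw [this, Real.dist_eq, abs_of_nonpos (by linarith)]
      rw [Real.dist_eq] at hk
      have := neg_le_abs (y k - b k)
      linarith
  calc Metric.infDist x (upset K B) ≤ dist x z := Metric.infDist_le_dist_of_mem hzB
    _ ≤ dist y b := hdist
    _ ≤ Metric.hausdorffDist A B + ε := hb.le

/-- for nonempty `A, B ⊆ [0,1]^K`, `h(up(A), up(B)) ≤ h(A, B)`. -/
theorem hausdorffDist_upset_le {K : ℕ} (A B : Set (Fin K → ℝ))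
    (hAne : A.Nonempty) (hBne : B.Nonempty)
    (hAsub : A ⊆ Set.Icc (0 : Fin K → ℝ) 1) (hBsub : B ⊆ Set.Icc (0 : Fin K → ℝ) 1) :
    Metric.hausdorffDist (upset K A) (upset K B) ≤ Metric.hausdorffDist A B := by
  have hbdd : Bornology.IsBounded (Set.Icc (0 : Fin K → ℝ) 1) := isCompact_Icc.isBounded
  have hne : EMetric.hausdorffEdist A B ≠ ⊤ :=
    Metric.hausdorffEdist_ne_top_of_nonempty_of_bounded hAne hBne
      (hbdd.subset hAsub) (hbdd.subset hBsub)
  have hne' : EMetric.hausdorffEdist B A ≠ ⊤ := by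
    unfold EMetric.hausdorffEdist at hne ⊢
    rwa [Metric.hausdorffEDist_comm]
  refine Metric.hausdorffDist_le_of_infDist Metric.hausdorffDist_nonneg
    (key A B hBne hBsub hne) fun x hx => ?_
  rw [Metric.hausdorffDist_comm]
  exact key B A hAne hAsub hne' x hx
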